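/- arXiv:2603.06616 — 4 statements merged into one kernel-verified Lean document; each statement's English description precedes it below -/
import Mathlib

section
/- Let s₁,…,s_{n+1} be exchangeable real-valued random variables and let λ̂ = inf{λ : (1 + Σ_{i=1}^n 1{s_i > λ})/(n+1) ≤ α} for α ∈ (1/(n+1), 1). Then P(s_{n+1} > λ̂) ≤ α. -/
open MeasureTheory



lemma racer_det (n : ℕ) (hn : 0 < n) (α : ℝ) (hα1 : 1 / ((n:ℝ) + 1) < α) (hα2 : α < 1)
    (x : Fin n → ℝ) (t : ℝ) :
    sInf {lam : ℝ | (1 + ∑ i : Fin n, (if lam < x i then (1:ℝ) else 0)) / ((n:ℝ)+1) ≤ α} < t ↔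
    (1 + ∑ i : Fin n, (if t ≤ x i then (1:ℝ) else 0)) / ((n:ℝ)+1) ≤ α := by
  classical
  have hne : (0:ℝ) < (n:ℝ) + 1 := by positivity
  have huniv : (Finset.univ : Finset (Fin n)).Nonempty := by
    have := Fin.pos_iff_nonempty.mp hn
    exact Finset.univ_nonempty
  set S := {lam : ℝ | (1 + ∑ i : Fin n, (if lam < x i then (1:ℝ) else 0)) / ((n:ℝ)+1) ≤ α}
    with hSdef
  have hSne : S.Nonempty := by
    refine ⟨Finset.univ.sup' huniv x, ?_⟩
    have hz : (∑ i : Fin n, (if Finset.univ.sup' huniv x < x i then (1:ℝ) else 0)) = 0 :=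
      Finset.sum_eq_zero fun i _ =>
        if_neg (not_lt.2 (Finset.le_sup' x (Finset.mem_univ i)))
    rw [hSdef, Set.mem_setOf_eq, hz, add_zero]
    exact le_of_lt hα1
  have hSbdd : BddBelow S := by
    refine ⟨Finset.univ.inf' huniv x, fun lam hlam => ?_⟩
    by_contra hcon
    push_neg at hcon
    have hall : ∀ i : Fin n, lam < x i := fun i =>
      lt_of_lt_of_le hcon (Finset.inf'_le x (Finset.mem_univ i))
    have hsum : (∑ i : Fin n, (if lam < x i then (1:ℝ) else 0)) = n := by
      rw [Finset.sum_congr rfl fun i _ => if_pos (hall i)]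
      simp
    rw [hSdef, Set.mem_setOf_eq, hsum] at hlam
    have h1 : ((1:ℝ) + n) / ((n:ℝ)+1) = 1 := by
      rw [add_comm]; exact div_self hne.ne'
    rw [h1] at hlam
    linarith
  rw [csInf_lt_iff hSbdd hSne]
  constructor
  · rintro ⟨lam, hlamS, hlt⟩
    rw [hSdef, Set.mem_setOf_eq] at hlamS
    have hmono : (∑ i : Fin n, (if t ≤ x i then (1:ℝ) else 0))
        ≤ ∑ i : Fin n, (if lam < x i then (1:ℝ) else 0) := by
      refine Finset.sum_le_sum fun i _ => ?_
      by_cases h : t ≤ x i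
      · rw [if_pos h, if_pos (lt_of_lt_of_le hlt h)]
      · rw [if_neg h]; positivity
    refine le_trans ?_ hlamS
    gcongr
  · intro hR
    set T := (Finset.univ.filter (fun i : Fin n => x i < t)).image x with hT
    set lam := (insert (t-1) T).max' (Finset.insert_nonempty _ _) with hlamdef
    have hlam_lt : lam < t := by
      rw [hlamdef, Finset.max'_lt_iff]
      intro b hb
      rcases Finset.mem_insert.mp hb with h | h
      · rw [h]; linarith
      · obtain ⟨i, hi, rfl⟩ := Finset.mem_image.mp h
        exact (Finset.mem_filter.mp hi).2
    refine ⟨lam, ?_, hlam_lt⟩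
    have hsum : (∑ i : Fin n, (if lam < x i then (1:ℝ) else 0))
        = ∑ i : Fin n, (if t ≤ x i then (1:ℝ) else 0) := by
      refine Finset.sum_congr rfl fun i _ => ?_
      by_cases h : t ≤ x i
      · rw [if_pos (lt_of_lt_of_le hlam_lt h), if_pos h]
      · push_neg at h
        have hxT : x i ∈ insert (t-1) T :=
          Finset.mem_insert_of_mem (Finset.mem_image_of_mem x (by simp [h]))
        have hle : x i ≤ lam := Finset.le_max' _ _ hxT
        rw [if_neg (not_lt.2 hle), if_neg (not_le.2 h)]
    rw [hSdef, Set.mem_setOf_eq, hsum]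
    exact hR


noncomputable def racerCnt (n : ℕ) (x : Fin (n+1) → ℝ) (j : Fin (n+1)) : ℝ :=
  ∑ i ∈ Finset.univ.erase j, (if x j ≤ x i then (1:ℝ) else 0)

def racerB (α : ℝ) (n : ℕ) (j : Fin (n+1)) : Set (Fin (n+1) → ℝ) :=
  {x | (1 + racerCnt n x j) / ((n:ℝ)+1) ≤ α}

lemma racer_perm (α : ℝ) (n : ℕ) (j : Fin (n+1)) (x : Fin (n+1) → ℝ) :
    x ∈ racerB α n j ↔ (x ∘ Equiv.swap j (Fin.last n)) ∈ racerB α n (Fin.last n) := by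
  have hcnt : racerCnt n (x ∘ Equiv.swap j (Fin.last n)) (Fin.last n) = racerCnt n x j := by
    unfold racerCnt
    refine Finset.sum_equiv (Equiv.swap j (Fin.last n)) (fun i => ?_) (fun i _ => ?_)
    · simp only [Finset.mem_erase, Finset.mem_univ, and_true]
      constructor
      · intro hi hc
        apply hi
        have : Equiv.swap j (Fin.last n) i = Equiv.swap j (Fin.last n) (Fin.last n) := by
          rw [Equiv.swap_apply_right]; exact hc
        exact (Equiv.apply_eq_iff_eq _).mp this
      · intro hi hc
        apply hi
        rw [hc, Equiv.swap_apply_right]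
    · simp only [Function.comp_apply, Equiv.swap_apply_right]
  simp only [racerB, Set.mem_setOf_eq, hcnt]

lemma racer_card (α : ℝ) (n : ℕ) (hα1 : 1/((n:ℝ)+1) < α) (x : Fin (n+1) → ℝ) :
    ∑ j : Fin (n+1), (racerB α n j).indicator (1 : (Fin (n+1) → ℝ) → ENNReal) x
      ≤ ENNReal.ofReal (α * ((n:ℝ)+1)) := by
  classical
  suffices hkey : (((Finset.univ.filter (fun j => x ∈ racerB α n j)).card : ℝ)) ≤ α * ((n:ℝ)+1) by
    calc ∑ j : Fin (n+1), (racerB α n j).indicator (1 : (Fin (n+1) → ℝ) → ENNReal) x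
        = ∑ j : Fin (n+1), (if x ∈ racerB α n j then (1:ENNReal) else 0) := by
          simp [Set.indicator_apply]
      _ = ((Finset.univ.filter (fun j => x ∈ racerB α n j)).card : ENNReal) := by
          rw [Finset.sum_boole]
      _ = ENNReal.ofReal (((Finset.univ.filter (fun j => x ∈ racerB α n j)).card : ℝ)) :=
          (ENNReal.ofReal_natCast _).symm
      _ ≤ _ := ENNReal.ofReal_le_ofReal hkey
  set J := Finset.univ.filter (fun j : Fin (n+1) => x ∈ racerB α n j) with hJ
  have hne : (0:ℝ) < (n:ℝ) + 1 := by positivity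
  have hc : (1:ℝ) < α * ((n:ℝ)+1) := by
    rw [div_lt_iff₀ hne] at hα1
    linarith
  rcases J.eq_empty_or_nonempty with h | h
  · rw [h]; simp; linarith
  · obtain ⟨j0, hj0J, hj0min⟩ := J.exists_min_image x h
    have hj0B : x ∈ racerB α n j0 := (Finset.mem_filter.mp hj0J).2
    have hcard : ((J.erase j0).card : ℝ) ≤ racerCnt n x j0 := by
      unfold racerCnt
      have hsub : J.erase j0 ⊆ Finset.univ.erase j0 :=
        Finset.erase_subset_erase _ (Finset.subset_univ J)
      calc ((J.erase j0).card : ℝ)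
          = ∑ i ∈ J.erase j0, (if x j0 ≤ x i then (1:ℝ) else 0) := by
            rw [Finset.sum_congr rfl fun i hi =>
              if_pos (hj0min i (Finset.mem_of_mem_erase hi))]
            simp
        _ ≤ ∑ i ∈ Finset.univ.erase j0, (if x j0 ≤ x i then (1:ℝ) else 0) :=
            Finset.sum_le_sum_of_subset_of_nonneg hsub (fun i _ _ => by positivity)
    have hB := hj0B
    rw [racerB, Set.mem_setOf_eq, div_le_iff₀ hne] at hB
    have hpos : 0 < J.card := Finset.card_pos.mpr h
    have hcard2 : (J.card : ℝ) = ((J.erase j0).card : ℝ) + 1 := by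
      rw [Finset.card_erase_of_mem hj0J]
      push_cast [Nat.cast_sub hpos]
      ring
    rw [hcard2]
    linarith


/-- Split conformal coverage guarantee: if s₁,…,s_{n+1} are exchangeable and
λ̂ = inf{λ : (1 + Σ_{i=1}^n 1{s_i > λ})/(n+1) ≤ α} with α ∈ (1/(n+1), 1),
then P(s_{n+1} > λ̂) ≤ α. -/
theorem racer_risk_control {Ω : Type*} [MeasurableSpace Ω]
    (μ : Measure Ω) [IsProbabilityMeasure μ]
    (n : ℕ) (s : Fin (n + 1) → Ω → ℝ) (hmeas : ∀ i, Measurable (s i))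
    (hexch : ∀ σ : Equiv.Perm (Fin (n + 1)),
      Measure.map (fun ω i => s (σ i) ω) μ = Measure.map (fun ω i => s i ω) μ)
    (α : ℝ) (hα1 : 1 / (n + 1) < α) (hα2 : α < 1)
    (lamhat : Ω → ℝ)
    (hlam : ∀ ω, lamhat ω = sInf {lam : ℝ |
      (1 + ∑ i : Fin n, (if lam < s i.castSucc ω then (1 : ℝ) else 0)) / (n + 1) ≤ α}) :
    (μ {ω | lamhat ω < s (Fin.last n) ω}).toReal ≤ α := by
  classical
  have hn : 0 < n := by
    rcases Nat.eq_zero_or_pos n with h | h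
    · subst h; norm_num at hα1; linarith
    · exact h
  have hα0 : 0 ≤ α := by
    have h0 : (0:ℝ) < 1/((n:ℝ)+1) := by positivity
    linarith
  set F : Ω → (Fin (n+1) → ℝ) := fun ω i => s i ω with hF
  have hFmeas : Measurable F := measurable_pi_lambda _ fun i => hmeas i
  set ν := Measure.map F μ with hν
  have hνprob : IsProbabilityMeasure ν := Measure.isProbabilityMeasure_map hFmeas.aemeasurable
  have hBmeas : ∀ j : Fin (n+1), MeasurableSet (racerB α n j) := by
    intro j
    have hcnt : Measurable fun x : Fin (n+1) → ℝ => racerCnt n x j := by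
      unfold racerCnt
      refine Finset.measurable_sum _ fun i _ => ?_
      exact Measurable.ite (measurableSet_le (measurable_pi_apply j) (measurable_pi_apply i))
        measurable_const measurable_const
    exact measurableSet_le ((measurable_const.add hcnt).div_const _) measurable_const
  -- event rewriting
  have hevent : {ω | lamhat ω < s (Fin.last n) ω} = F ⁻¹' (racerB α n (Fin.last n)) := by
    ext ω
    rw [Set.mem_setOf_eq, hlam ω, Set.mem_preimage]
    have hdet := racer_det n hn α hα1 hα2 (fun i => s i.castSucc ω) (s (Fin.last n) ω)
    rw [hdet]
    simp only [racerB, racerCnt, Set.mem_setOf_eq]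
    have hsum : ∑ i ∈ Finset.univ.erase (Fin.last n),
          (if F ω (Fin.last n) ≤ F ω i then (1:ℝ) else 0)
        = ∑ i : Fin n, (if s (Fin.last n) ω ≤ s i.castSucc ω then (1:ℝ) else 0) := by
      have h1 := Finset.sum_erase_add Finset.univ
        (fun i => if F ω (Fin.last n) ≤ F ω i then (1:ℝ) else 0) (Finset.mem_univ (Fin.last n))
      have h2 := Fin.sum_univ_castSucc
        (f := fun i => if F ω (Fin.last n) ≤ F ω i then (1:ℝ) else 0)
      have hFe : ∀ i, F ω i = s i ω := fun i => rfl
      simp only [hFe] at h1 h2 ⊢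
      linarith
    rw [hsum]
  -- all B_j have the same ν-measure
  have hBj : ∀ j : Fin (n+1), ν (racerB α n j) = ν (racerB α n (Fin.last n)) := by
    intro j
    set σ := Equiv.swap j (Fin.last n) with hσ
    have hσmeas : Measurable fun v : Fin (n+1) → ℝ => v ∘ σ :=
      measurable_pi_lambda _ fun i => measurable_pi_apply (σ i)
    have hpre : racerB α n j = (fun v : Fin (n+1) → ℝ => v ∘ σ) ⁻¹' racerB α n (Fin.last n) := by
      ext v; exact racer_perm α n j v
    rw [hpre, ← Measure.map_apply hσmeas (hBmeas _), hν, Measure.map_map hσmeas hFmeas]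
    have hcomp : ((fun v : Fin (n+1) → ℝ => v ∘ σ) ∘ F) = fun ω i => s (σ i) ω := rfl
    rw [hcomp, hexch σ]
  -- sum bound via lintegral
  have hsumν : ∑ j : Fin (n+1), ν (racerB α n j) ≤ ENNReal.ofReal (α * ((n:ℝ)+1)) := by
    calc ∑ j : Fin (n+1), ν (racerB α n j)
        = ∫⁻ x, ∑ j : Fin (n+1), (racerB α n j).indicator 1 x ∂ν := by
          rw [lintegral_finset_sum _ fun j _ => (measurable_one.indicator (hBmeas j))]
          exact Finset.sum_congr rfl fun j _ => (lintegral_indicator_one (hBmeas j)).symm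
      _ ≤ ∫⁻ _, ENNReal.ofReal (α * ((n:ℝ)+1)) ∂ν :=
          lintegral_mono fun x => racer_card α n hα1 x
      _ = ENNReal.ofReal (α * ((n:ℝ)+1)) := by
          rw [lintegral_const, measure_univ, mul_one]
  have hsum2 : ((n:ENNReal)+1) * ν (racerB α n (Fin.last n)) ≤ ENNReal.ofReal (α * ((n:ℝ)+1)) := by
    calc ((n:ENNReal)+1) * ν (racerB α n (Fin.last n))
        = ∑ _j : Fin (n+1), ν (racerB α n (Fin.last n)) := by
          rw [Finset.sum_const, Finset.card_univ, Fintype.card_fin, nsmul_eq_mul]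
          push_cast
          ring
      _ = ∑ j : Fin (n+1), ν (racerB α n j) :=
          (Finset.sum_congr rfl fun j _ => (hBj j).symm)
      _ ≤ _ := hsumν
  have hofReal : ENNReal.ofReal (α * ((n:ℝ)+1)) = ((n:ENNReal)+1) * ENNReal.ofReal α := by
    rw [mul_comm, ENNReal.ofReal_mul (by positivity : (0:ℝ) ≤ (n:ℝ)+1)]
    congr 1
    rw [show ((n:ℝ)+1) = ((n+1 : ℕ) : ℝ) by push_cast; ring, ENNReal.ofReal_natCast]
    push_cast
    ring
  rw [hofReal] at hsum2
  have hfin : ν (racerB α n (Fin.last n)) ≤ ENNReal.ofReal α := by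
    have hne0 : ((n:ENNReal)+1) ≠ 0 := by simp
    have hnetop : ((n:ENNReal)+1) ≠ ⊤ := by simp
    exact (ENNReal.mul_le_mul_iff_right hne0 hnetop).mp hsum2
  rw [hevent]
  have hμ : μ (F ⁻¹' racerB α n (Fin.last n)) = ν (racerB α n (Fin.last n)) :=
    (Measure.map_apply hFmeas (hBmeas _)).symm
  rw [hμ]
  exact ENNReal.toReal_le_of_le_ofReal hα0 hfin
end

section
/- Let s₁,…,s_{n+1} be i.i.d. real-valued random variables with continuous distribution, and let λ̂ = inf{λ : (1 + Σ_{i=1}^n 1{s_i > λ})/(n+1) ≤ α} for α ∈ (0,1) with α(n+1) ≥ 1. Then P(s_{n+1} > λ̂) ≥ α − 2/(n+1). -/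
open MeasureTheory

open scoped ENNReal

open Finset

lemma racer_rank_card {n m : ℕ} (hm : m ≤ n) (x : Fin (n + 1) → ℝ)
    (hx : Function.Injective x) :
    (Finset.univ.filter fun j : Fin (n+1) =>
      (Finset.univ.filter fun i => x j < x i).card ≤ m).card = m + 1 := by
  set r : Fin (n + 1) → ℕ := fun j => (Finset.univ.filter fun i => x j < x i).card with hr
  have hmono : ∀ j k, x j < x k → r k < r j := by
    intro j k h
    apply Finset.card_lt_card
    refine (Finset.ssubset_iff_of_subset ?_).mpr ⟨k, ?_, ?_⟩
    · intro i hi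
      simp only [Finset.mem_filter, Finset.mem_univ, true_and] at hi ⊢
      exact h.trans hi
    · simp [h]
    · simp
  have hinj : Function.Injective r := by
    intro j k hjk
    by_contra hne
    rcases lt_trichotomy (x j) (x k) with h | h | h
    · exact absurd hjk (hmono j k h).ne'
    · exact hne (hx h)
    · exact absurd hjk (hmono k j h).ne
  have hle : ∀ j, r j ≤ n := by
    intro j
    have hsub : (Finset.univ.filter fun i => x j < x i) ⊆ Finset.univ.erase j := by
      intro i hi
      simp only [Finset.mem_filter, Finset.mem_univ, true_and] at hi
      exact Finset.mem_erase.mpr ⟨fun h => absurd hi (by simp [h]), Finset.mem_univ i⟩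
    calc r j ≤ (Finset.univ.erase j).card := Finset.card_le_card hsub
      _ = n := by
        rw [Finset.card_erase_of_mem (Finset.mem_univ j), Finset.card_univ]
        simp
  have himg : Finset.univ.image r = Finset.range (n + 1) := by
    apply Finset.eq_of_subset_of_card_le
    · intro v hv
      obtain ⟨j, _, hj⟩ := Finset.mem_image.mp hv
      have := hle j
      exact Finset.mem_range.mpr (by omega)
    · rw [Finset.card_range, Finset.card_image_of_injective _ hinj, Finset.card_univ,
        Fintype.card_fin]
  have key : (Finset.univ.filter fun j => r j ≤ m).card = m + 1 := calc
    (Finset.univ.filter fun j => r j ≤ m).card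
      = ((Finset.univ.filter fun j => r j ≤ m).image r).card :=
        (Finset.card_image_of_injective _ hinj).symm
    _ = ((Finset.univ.image r).filter fun v => v ≤ m).card := by
        rw [Finset.filter_image]
    _ = ((Finset.range (n + 1)).filter fun v => v ≤ m).card := by rw [himg]
    _ = m + 1 := by
        have : (Finset.range (n + 1)).filter (fun v => v ≤ m) = Finset.range (m + 1) := by
          ext v; simp only [Finset.mem_filter, Finset.mem_range]; omega
        rw [this, Finset.card_range]
  exact key

open MeasureTheory

section
variable {Ω : Type*} [MeasurableSpace Ω] (μ : Measure Ω) [IsProbabilityMeasure μ]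
  (n : ℕ) (s : Fin (n + 1) → Ω → ℝ)

lemma racer_map_pi (hmeas : ∀ i, Measurable (s i))
    (hindep : ProbabilityTheory.iIndepFun s μ)
    (hident : ∀ i, Measure.map (s i) μ = Measure.map (s 0) μ) :
    Measure.map (fun ω i => s i ω) μ
      = Measure.pi (fun _ : Fin (n + 1) => Measure.map (s 0) μ) := by
  have hT : Measurable (fun ω i => s i ω) := measurable_pi_lambda _ hmeas
  refine (Measure.pi_eq fun A hA => ?_).symm
  rw [Measure.map_apply hT (MeasurableSet.univ_pi hA)]
  have hpre : (fun ω i => s i ω) ⁻¹' Set.univ.pi A = ⋂ i ∈ Finset.univ, s i ⁻¹' A i := by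
    ext ω; simp [Set.mem_pi]
  rw [hpre, hindep.measure_inter_preimage_eq_mul Finset.univ (fun i _ => hA i)]
  refine Finset.prod_congr rfl fun i _ => ?_
  rw [← hident i, Measure.map_apply (hmeas i) (hA i)]

lemma racer_perm_invariant (ν : Measure ℝ) [IsProbabilityMeasure ν]
    (σ : Equiv.Perm (Fin (n + 1))) :
    Measure.map (fun x : Fin (n + 1) → ℝ => x ∘ σ)
        (Measure.pi fun _ : Fin (n + 1) => ν)
      = Measure.pi fun _ : Fin (n + 1) => ν := by
  have h := MeasureTheory.measurePreserving_piCongrLeft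
    (fun _ : Fin (n + 1) => ν) σ.symm
  have hfun : ⇑(MeasurableEquiv.piCongrLeft (fun _ : Fin (n + 1) => ℝ) σ.symm)
      = fun x : Fin (n + 1) → ℝ => x ∘ σ := by
    funext x
    funext i
    have h2 := MeasurableEquiv.piCongrLeft_apply_apply σ.symm
      (β := fun _ : Fin (n + 1) => ℝ) x (σ i)
    simpa using h2
  have := h.map_eq
  rwa [hfun] at this

end

open MeasureTheory

lemma racer_tie_null {Ω : Type*} [MeasurableSpace Ω] (μ : Measure Ω) [IsProbabilityMeasure μ]
    (n : ℕ) (s : Fin (n + 1) → Ω → ℝ) (hmeas : ∀ i, Measurable (s i))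
    (hindep : ProbabilityTheory.iIndepFun s μ)
    (hident : ∀ i, Measure.map (s i) μ = Measure.map (s 0) μ)
    (hcont : ∀ (i : Fin (n + 1)) (c : ℝ), μ {ω | s i ω = c} = 0)
    {i j : Fin (n + 1)} (hij : i ≠ j) :
    μ {ω | s i ω = s j ω} = 0 := by
  set ν : Measure ℝ := Measure.map (s 0) μ with hν
  have hνinst : IsProbabilityMeasure ν := Measure.isProbabilityMeasure_map (hmeas 0).aemeasurable
  have hatom : ∀ c : ℝ, ν {c} = 0 := by
    intro c
    rw [hν, Measure.map_apply (hmeas 0) (measurableSet_singleton c)]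
    have : (s 0) ⁻¹' {c} = {ω | s 0 ω = c} := by ext ω; simp
    rw [this]; exact hcont 0 c
  have hIndep : ProbabilityTheory.IndepFun (s i) (s j) μ :=
    hindep.indepFun hij
  have hprod : μ.map (fun ω => (s i ω, s j ω)) = ν.prod ν := by
    rw [(ProbabilityTheory.indepFun_iff_map_prod_eq_prod_map_map
        (hmeas i).aemeasurable (hmeas j).aemeasurable).mp hIndep, hident i, hident j]
  have hdiag : MeasurableSet {p : ℝ × ℝ | p.1 = p.2} :=
    measurableSet_eq_fun measurable_fst measurable_snd
  have : {ω | s i ω = s j ω} = (fun ω => (s i ω, s j ω)) ⁻¹' {p : ℝ × ℝ | p.1 = p.2} := by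
    ext ω; simp
  rw [this, ← Measure.map_apply ((hmeas i).prodMk (hmeas j)) hdiag, hprod,
    Measure.prod_apply hdiag]
  have : ∀ x : ℝ, ν (Prod.mk x ⁻¹' {p : ℝ × ℝ | p.1 = p.2}) = 0 := by
    intro x
    have : (Prod.mk x ⁻¹' {p : ℝ × ℝ | p.1 = p.2}) = {x} := by
      ext y; simp [eq_comm]
    rw [this]; exact hatom x
  simp [this]
  simp [hatom]


/-- Risk lower bound: if s₁,…,s_{n+1} are i.i.d. with continuous distribution and
λ̂ = inf{λ : (1 + Σ_{i=1}^n 1{s_i > λ})/(n+1) ≤ α} with α ∈ (0,1), α(n+1) ≥ 1,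
then P(s_{n+1} > λ̂) ≥ α − 2/(n+1). -/
theorem racer_risk_lower_bound {Ω : Type*} [MeasurableSpace Ω]
    (μ : Measure Ω) [IsProbabilityMeasure μ]
    (n : ℕ) (s : Fin (n + 1) → Ω → ℝ) (hmeas : ∀ i, Measurable (s i))
    (hindep : ProbabilityTheory.iIndepFun s μ)
    (hident : ∀ i, Measure.map (s i) μ = Measure.map (s 0) μ)
    (hcont : ∀ (i : Fin (n + 1)) (c : ℝ), μ {ω | s i ω = c} = 0)
    (α : ℝ) (hα1 : 0 < α) (hα2 : α < 1) (hα3 : 1 ≤ α * (n + 1))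
    (lamhat : Ω → ℝ)
    (hlam : ∀ ω, lamhat ω = sInf {lam : ℝ |
      (1 + ∑ i : Fin n, (if lam < s i.castSucc ω then (1 : ℝ) else 0)) / (n + 1) ≤ α}) :
    α - 2 / (n + 1) ≤ (μ {ω | lamhat ω < s (Fin.last n) ω}).toReal := by
  classical
  by_cases htriv : α - 2 / ((n : ℝ) + 1) ≤ 0
  · exact htriv.trans ENNReal.toReal_nonneg
  push_neg at htriv
  have hnpos : (0 : ℝ) < (n : ℝ) + 1 := by positivity
  have h2lt : (2 : ℝ) < α * ((n : ℝ) + 1) := by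
    have := (div_lt_iff₀ hnpos).mp (by linarith : 2 / ((n : ℝ) + 1) < α)
    linarith
  have hn2 : 2 ≤ n := by
    have hx : α * ((n : ℝ) + 1) < (n : ℝ) + 1 := by nlinarith
    have h1 : (1 : ℝ) < (n : ℝ) := by linarith
    have : (1 : ℕ) < n := by exact_mod_cast h1
    omega
  set x : ℝ := α * ((n : ℝ) + 1) with hxdef
  have hx0 : (0 : ℝ) ≤ x := by positivity
  have hfl2 : 2 ≤ ⌊x⌋₊ := Nat.le_floor (by exact_mod_cast h2lt.le)
  set m : ℕ := ⌊x⌋₊ - 1 with hmdef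
  have hmcast : ((m : ℝ)) = (⌊x⌋₊ : ℝ) - 1 := by
    rw [hmdef, Nat.cast_sub (by omega)]; norm_num
  have hm1 : (m : ℝ) ≤ x - 1 := by
    have := Nat.floor_le hx0
    rw [hmcast]; linarith
  have hm2 : x - 1 < (m : ℝ) + 1 := by
    have := Nat.lt_floor_add_one x
    rw [hmcast]; linarith
  have hmn : m ≤ n := by
    have hx : x < (n : ℝ) + 1 := by nlinarith
    have : (m : ℝ) < (n : ℝ) := by linarith
    exact_mod_cast this.le
  -- push-forward setup
  set ν : Measure ℝ := Measure.map (s 0) μ with hνdef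
  haveI hνinst : IsProbabilityMeasure ν := Measure.isProbabilityMeasure_map (hmeas 0).aemeasurable
  set P : Measure (Fin (n + 1) → ℝ) := Measure.pi (fun _ : Fin (n + 1) => ν) with hPdef
  set T : Ω → Fin (n + 1) → ℝ := fun ω i => s i ω with hTdef
  have hT : Measurable T := measurable_pi_lambda _ hmeas
  have hmap : Measure.map T μ = P := racer_map_pi μ n s hmeas hindep hident
  set R : (Fin (n + 1) → ℝ) → Fin (n + 1) → ℝ :=
    fun x j => ∑ i, if x j < x i then (1 : ℝ) else 0 with hRdef
  have hRmeas : ∀ j, Measurable fun y => R y j := by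
    intro j
    apply Finset.measurable_sum
    intro i _
    exact Measurable.ite (measurableSet_lt (measurable_pi_apply j) (measurable_pi_apply i))
      measurable_const measurable_const
  set C : Fin (n + 1) → Set (Fin (n + 1) → ℝ) := fun j => {y | R y j ≤ (m : ℝ)} with hCdef
  have hCmeas : ∀ j, MeasurableSet (C j) := fun j =>
    measurableSet_le (hRmeas j) measurable_const
  set A : Fin (n + 1) → Set Ω := fun j => T ⁻¹' C j with hAdef
  have hAmeas : ∀ j, MeasurableSet (A j) := fun j => hT (hCmeas j)
  have hμA : ∀ j, μ (A j) = P (C j) := by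
    intro j
    rw [hAdef, ← Measure.map_apply hT (hCmeas j), hmap]
  -- exchangeability
  have hPC : ∀ j, P (C j) = P (C (Fin.last n)) := by
    intro j
    set σ : Equiv.Perm (Fin (n + 1)) := Equiv.swap j (Fin.last n) with hσdef
    have hσlast : σ (Fin.last n) = j := by
      rw [hσdef]; exact Equiv.swap_apply_right _ _
    have hcomp : Measurable fun y : Fin (n + 1) → ℝ => y ∘ σ :=
      measurable_pi_lambda _ fun i => measurable_pi_apply (σ i)
    have hpre : (fun y : Fin (n + 1) → ℝ => y ∘ σ) ⁻¹' C (Fin.last n) = C j := by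
      ext y
      have hRy : R (y ∘ σ) (Fin.last n) = R y j := by
        have h1 : R (y ∘ σ) (Fin.last n)
            = ∑ i, if y j < y (σ i) then (1 : ℝ) else 0 := by
          simp only [hRdef, Function.comp_apply, hσlast]
        rw [h1, Equiv.sum_comp σ (fun i => if y j < y i then (1 : ℝ) else 0)]
      simp only [hCdef, Set.mem_preimage, Set.mem_setOf_eq, hRy]
    calc P (C j) = P ((fun y : Fin (n + 1) → ℝ => y ∘ σ) ⁻¹' C (Fin.last n)) := by rw [hpre]
      _ = (Measure.map (fun y : Fin (n + 1) → ℝ => y ∘ σ) P) (C (Fin.last n)) :=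
          (Measure.map_apply hcomp (hCmeas (Fin.last n))).symm
      _ = P (C (Fin.last n)) := by rw [hPdef, racer_perm_invariant n ν σ]
  -- the no-ties event
  set G : Set Ω := {ω | Function.Injective fun i => s i ω} with hGdef
  have hGc : Gᶜ = ⋃ i, ⋃ j, ⋃ (_ : i ≠ j), {ω | s i ω = s j ω} := by
    ext ω
    simp only [hGdef, Set.mem_compl_iff, Set.mem_setOf_eq, Set.mem_iUnion]
    constructor
    · intro h
      obtain ⟨a, b, hab, hne⟩ := Function.not_injective_iff.mp h
      exact ⟨a, b, hne, hab⟩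
    · rintro ⟨a, b, hne, hab⟩
      exact Function.not_injective_iff.mpr ⟨a, b, hab, hne⟩
  have hGc0 : μ Gᶜ = 0 := by
    rw [hGc]
    exact measure_iUnion_null fun i => measure_iUnion_null fun j =>
      measure_iUnion_null fun hij => racer_tie_null μ n s hmeas hindep hident hcont hij
  have hGcmeas : MeasurableSet Gᶜ := by
    rw [hGc]
    exact MeasurableSet.iUnion fun i => MeasurableSet.iUnion fun j =>
      MeasurableSet.iUnion fun _ => measurableSet_eq_fun (hmeas i) (hmeas j)
  have hGmeas : MeasurableSet G := MeasurableSet.compl_iff.mp hGcmeas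
  have hμG : μ G = 1 := by
    have hGu : G =ᵐ[μ] Set.univ := MeasureTheory.ae_eq_univ.mpr hGc0
    rw [measure_congr hGu, measure_univ]
  -- pointwise identity
  have hAiff : ∀ ω j, ω ∈ A j ↔
      (Finset.univ.filter fun i => s j ω < s i ω).card ≤ m := by
    intro ω j
    simp only [hAdef, hCdef, Set.mem_preimage, Set.mem_setOf_eq, hRdef, hTdef]
    rw [Finset.sum_boole]
    exact_mod_cast Iff.rfl
  have hpt : ∀ ω, ∑ j : Fin (n + 1), (A j ∩ G).indicator (fun _ => (1 : ℝ≥0∞)) ω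
      = G.indicator (fun _ => ((m + 1 : ℕ) : ℝ≥0∞)) ω := by
    intro ω
    by_cases hω : ω ∈ G
    · have hinj : Function.Injective fun i => s i ω := hω
      rw [Set.indicator_of_mem hω]
      have hterm : ∀ j, (A j ∩ G).indicator (fun _ => (1 : ℝ≥0∞)) ω
          = if ω ∈ A j then 1 else 0 := by
        intro j
        by_cases h : ω ∈ A j <;> simp [Set.indicator, h, hω]
      rw [Finset.sum_congr rfl fun j _ => hterm j, Finset.sum_boole]
      have hcard : (Finset.univ.filter fun j => ω ∈ A j).card = m + 1 := by
        have hcong : (Finset.univ.filter fun j => ω ∈ A j)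
            = Finset.univ.filter fun j : Fin (n + 1) =>
                (Finset.univ.filter fun i => (fun i => s i ω) j < (fun i => s i ω) i).card ≤ m := by
          apply Finset.filter_congr
          intro j _
          simpa using hAiff ω j
        rw [hcong, racer_rank_card hmn (fun i => s i ω) hinj]
      rw [hcard]
    · rw [Set.indicator_of_notMem hω]
      apply Finset.sum_eq_zero
      intro j _
      exact Set.indicator_of_notMem (fun h => hω h.2) _
  -- sum of measures
  have hsum : ∑ j : Fin (n + 1), μ (A j ∩ G) = ((m + 1 : ℕ) : ℝ≥0∞) := by
    have h1 : ∀ j : Fin (n + 1), μ (A j ∩ G)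
        = ∫⁻ ω, (A j ∩ G).indicator (fun _ => (1 : ℝ≥0∞)) ω ∂μ := by
      intro j
      rw [lintegral_indicator_const ((hAmeas j).inter hGmeas), one_mul]
    rw [Finset.sum_congr rfl fun j _ => h1 j,
      ← lintegral_finset_sum _ (fun j _ =>
        measurable_const.indicator ((hAmeas j).inter hGmeas)),
      lintegral_congr hpt, lintegral_indicator_const hGmeas, hμG, mul_one]
  -- the key inclusion
  have hincl : A (Fin.last n) ∩ G ⊆ {ω | lamhat ω < s (Fin.last n) ω} := by
    rintro ω ⟨hA, hG⟩
    have hinj : Function.Injective fun i => s i ω := hG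
    rw [Set.mem_setOf_eq, hlam ω]
    set t := s (Fin.last n) ω with htdef
    have hcount : ∑ i : Fin n, (if t < s i.castSucc ω then (1 : ℝ) else 0) ≤ (m : ℝ) := by
      have hlastR : R (T ω) (Fin.last n)
          = ∑ i : Fin n, (if t < s i.castSucc ω then (1 : ℝ) else 0) := by
        simp only [hRdef, hTdef]
        rw [Fin.sum_univ_castSucc]
        simp [htdef]
      have hA' : R (T ω) (Fin.last n) ≤ (m : ℝ) := hA
      rwa [hlastR] at hA'
    set F : Finset ℝ := insert (t - 1)
      ((Finset.univ.image fun i : Fin n => s i.castSucc ω).filter (· < t)) with hFdef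
    have hFne : F.Nonempty := ⟨t - 1, Finset.mem_insert_self _ _⟩
    set lam0 := F.max' hFne with hlam0def
    have hlam0lt : lam0 < t := by
      have hmem : lam0 ∈ F := Finset.max'_mem F hFne
      rcases Finset.mem_insert.mp hmem with h | h
      · rw [h]; linarith
      · exact (Finset.mem_filter.mp h).2
    have hmemS : lam0 ∈ {lam : ℝ |
        (1 + ∑ i : Fin n, (if lam < s i.castSucc ω then (1 : ℝ) else 0)) / ((n : ℝ) + 1) ≤ α} := by
      have hterm : ∀ i : Fin n, (if lam0 < s i.castSucc ω then (1 : ℝ) else 0)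
          ≤ (if t < s i.castSucc ω then (1 : ℝ) else 0) := by
        intro i
        by_cases h : lam0 < s i.castSucc ω
        · rw [if_pos h]
          rcases lt_trichotomy (s i.castSucc ω) t with hv | hv | hv
          · exfalso
            have hmemF : s i.castSucc ω ∈ F := by
              apply Finset.mem_insert_of_mem
              exact Finset.mem_filter.mpr ⟨Finset.mem_image_of_mem _ (Finset.mem_univ i), hv⟩
            have := Finset.le_max' F _ hmemF
            rw [← hlam0def] at this
            linarith
          · exfalso
            have : i.castSucc = Fin.last n := hinj hv
            exact absurd this (Fin.castSucc_lt_last i).ne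
          · rw [if_pos hv]
        · rw [if_neg h]
          split_ifs <;> norm_num
      have hsum' : ∑ i : Fin n, (if lam0 < s i.castSucc ω then (1 : ℝ) else 0)
          ≤ ∑ i : Fin n, (if t < s i.castSucc ω then (1 : ℝ) else 0) :=
        Finset.sum_le_sum fun i _ => hterm i
      show (1 + ∑ i : Fin n, (if lam0 < s i.castSucc ω then (1 : ℝ) else 0)) / ((n : ℝ) + 1) ≤ α
      rw [div_le_iff₀ hnpos]
      calc 1 + ∑ i : Fin n, (if lam0 < s i.castSucc ω then (1 : ℝ) else 0)
          ≤ 1 + (m : ℝ) := by linarith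
        _ ≤ x := by linarith
        _ = α * ((n : ℝ) + 1) := hxdef
    have huniv : (Finset.univ : Finset (Fin n)).Nonempty :=
      ⟨⟨0, by omega⟩, Finset.mem_univ _⟩
    have himg : ((Finset.univ : Finset (Fin n)).image fun i : Fin n => s i.castSucc ω).Nonempty :=
      huniv.image _
    have hbdd : BddBelow {lam : ℝ |
        (1 + ∑ i : Fin n, (if lam < s i.castSucc ω then (1 : ℝ) else 0)) / ((n : ℝ) + 1) ≤ α} := by
      refine ⟨((Finset.univ : Finset (Fin n)).image fun i : Fin n => s i.castSucc ω).min' himg,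
        fun lam hlamS => ?_⟩
      by_contra hcon
      push_neg at hcon
      have hall : ∀ i : Fin n, lam < s i.castSucc ω := by
        intro i
        have := Finset.min'_le _ _ (Finset.mem_image_of_mem (fun i : Fin n => s i.castSucc ω)
          (Finset.mem_univ i))
        linarith
      have hsumn : ∑ i : Fin n, (if lam < s i.castSucc ω then (1 : ℝ) else 0) = (n : ℝ) := by
        rw [Finset.sum_congr rfl fun i _ => if_pos (hall i)]
        simp
      have := hlamS
      rw [Set.mem_setOf_eq, hsumn, div_le_iff₀ hnpos] at this
      nlinarith
    exact lt_of_le_of_lt (csInf_le hbdd hmemS) hlam0lt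
  -- chaining the bounds
  have hbound : ∀ j : Fin (n + 1), μ (A j ∩ G) ≤ μ {ω | lamhat ω < s (Fin.last n) ω} := by
    intro j
    calc μ (A j ∩ G) ≤ μ (A j) := measure_mono Set.inter_subset_left
      _ = P (C (Fin.last n)) := by rw [hμA j, hPC j]
      _ = μ (A (Fin.last n)) := (hμA _).symm
      _ ≤ μ (A (Fin.last n) ∩ G) + μ Gᶜ := by
          refine le_trans (measure_mono ?_) (measure_union_le _ _)
          intro ω hω
          by_cases h : ω ∈ G
          · exact Or.inl ⟨hω, h⟩
          · exact Or.inr h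
      _ = μ (A (Fin.last n) ∩ G) := by rw [hGc0, add_zero]
      _ ≤ μ {ω | lamhat ω < s (Fin.last n) ω} := measure_mono hincl
  have hkey : ((m + 1 : ℕ) : ℝ≥0∞)
      ≤ ((n + 1 : ℕ) : ℝ≥0∞) * μ {ω | lamhat ω < s (Fin.last n) ω} := by
    rw [← hsum]
    calc ∑ j : Fin (n + 1), μ (A j ∩ G)
        ≤ ∑ _j : Fin (n + 1), μ {ω | lamhat ω < s (Fin.last n) ω} :=
          Finset.sum_le_sum fun j _ => hbound j
      _ = ((n + 1 : ℕ) : ℝ≥0∞) * μ {ω | lamhat ω < s (Fin.last n) ω} := by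
          rw [Finset.sum_const, Finset.card_univ, Fintype.card_fin, nsmul_eq_mul]
  -- convert to reals
  have hfin : μ {ω | lamhat ω < s (Fin.last n) ω} ≠ ⊤ := measure_ne_top μ _
  have hreal : ((m : ℝ) + 1)
      ≤ ((n : ℝ) + 1) * (μ {ω | lamhat ω < s (Fin.last n) ω}).toReal := by
    have := ENNReal.toReal_le_toReal (by simp) (ENNReal.mul_ne_top (by simp) hfin) |>.mpr hkey
    rw [ENNReal.toReal_mul] at this
    rw [ENNReal.toReal_natCast, ENNReal.toReal_natCast] at this; push_cast at this; exact this
  have hdc : (2 / ((n : ℝ) + 1)) * ((n : ℝ) + 1) = 2 := div_mul_cancel₀ _ (ne_of_gt hnpos)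
  nlinarith [hreal, hm2, hnpos,
    mul_pos hnpos (show (0:ℝ) < 1 from one_pos)]
end

section
/- Under exchangeability of s₁,…,s_{n+1} and with λ̂ defined by λ̂ = inf{λ : (n/(n+1))·L̄_n(λ) + 1/(n+1) ≤ α} where L̄_n(λ) = (1/n)Σ_{i=1}^n 1{s_i > λ}, combining the upper and lower bounds yields α − 2/(n+1) ≤ P(s_{n+1} > λ̂) ≤ α, provided additionally the s_i are i.i.d. with continuous distribution and α(n+1) ≥ 1. -/
open MeasureTheory
open scoped ENNReal

lemma racer_aux1 {n m : ℕ} (hn : 0 < n) (hmn : m < n) (x : Fin n → ℝ) (y : ℝ)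
    (hdist : ∀ i, x i ≠ y) :
    sInf {lam : ℝ | (Finset.univ.filter fun i => lam < x i).card ≤ m} < y ↔
      (Finset.univ.filter fun i => y < x i).card ≤ m := by
  have hne' : (Finset.univ : Finset (Fin n)).Nonempty := by
    simpa [Finset.univ_nonempty_iff] using Fin.pos_iff_nonempty.mp hn
  set S := {lam : ℝ | (Finset.univ.filter fun i => lam < x i).card ≤ m} with hS
  have hne : S.Nonempty := by
    refine ⟨Finset.univ.sup' hne' x, ?_⟩
    have : (Finset.univ.filter fun i => Finset.univ.sup' hne' x < x i) = ∅ := by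
      refine Finset.filter_false_of_mem fun i _ => not_lt.2 ?_
      exact Finset.le_sup' x (Finset.mem_univ i)
    rw [hS, Set.mem_setOf_eq, this, Finset.card_empty]
    exact Nat.zero_le m
  have hbdd : BddBelow S := by
    refine ⟨Finset.univ.inf' hne' x, fun lam hlam => ?_⟩
    by_contra hcon
    push_neg at hcon
    have : (Finset.univ.filter fun i => lam < x i) = Finset.univ := by
      refine Finset.filter_true_of_mem fun i _ => ?_
      exact lt_of_lt_of_le hcon (Finset.inf'_le x (Finset.mem_univ i))
    rw [hS, Set.mem_setOf_eq, this, Finset.card_univ, Fintype.card_fin] at hlam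
    exact absurd hlam (not_le.2 hmn)
  constructor
  · intro h
    obtain ⟨lam, hlamS, hlt⟩ := (csInf_lt_iff hbdd hne).mp h
    refine le_trans (Finset.card_le_card ?_) hlamS
    exact Finset.monotone_filter_right _ fun i _ hi => lt_trans hlt hi
  · intro h
    have hε : 0 < Finset.univ.inf' hne' fun i => |x i - y| := by
      rw [Finset.lt_inf'_iff]
      intro i _
      exact abs_sub_pos.mpr (hdist i)
    set ε := Finset.univ.inf' hne' fun i => |x i - y| with hεdef
    have hmem : y - ε / 2 ∈ S := by
      have heq : (Finset.univ.filter fun i => y - ε / 2 < x i)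
          = Finset.univ.filter fun i => y < x i := by
        refine Finset.filter_congr fun i _ => ?_
        have hεle : ε ≤ |x i - y| := Finset.inf'_le _ (Finset.mem_univ i)
        constructor
        · intro hlt
          rcases lt_or_gt_of_ne (hdist i) with hc | hc
          · exfalso
            have : y - x i ≥ ε := by
              rw [abs_of_neg (by linarith : x i - y < 0)] at hεle; linarith
            linarith
          · exact hc
        · intro hlt; linarith
      rw [hS, Set.mem_setOf_eq, heq]
      exact h
    calc sInf S ≤ y - ε / 2 := csInf_le hbdd hmem
    _ < y := by linarith


set_option maxHeartbeats 1000000 in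
lemma racer_aux2 {N m : ℕ} (hm : m < N) (x : Fin N → ℝ) (hinj : Function.Injective x) :
    (Finset.univ.filter fun k =>
      (Finset.univ.filter fun j => x k < x j).card ≤ m).card = m + 1 := by
  set r : Fin N → ℕ := fun k => (Finset.univ.filter fun j => x k < x j).card with hr
  have hanti : ∀ k k', x k < x k' → r k' < r k := by
    intro k k' hlt
    refine Finset.card_lt_card ⟨Finset.monotone_filter_right _ fun j _ hj => lt_trans hlt hj, ?_⟩
    intro hsub
    have : k' ∈ Finset.univ.filter fun j => x k' < x j :=
      hsub (Finset.mem_filter.2 ⟨Finset.mem_univ _, hlt⟩)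
    exact absurd (Finset.mem_filter.1 this).2 (lt_irrefl _)
  have hrinj : Function.Injective r := by
    intro k k' hkk'
    rcases lt_trichotomy (x k) (x k') with h | h | h
    · exact absurd hkk' (by have := hanti k k' h; omega)
    · exact hinj h
    · exact absurd hkk' (by have := hanti k' k h; omega)
  have hlt : ∀ k, r k < N := by
    intro k
    have hsub : (Finset.univ.filter fun j => x k < x j) ⊆ Finset.univ.erase k := by
      intro j hj
      refine Finset.mem_erase.2 ⟨?_, Finset.mem_univ _⟩
      intro hjk
      exact absurd (Finset.mem_filter.1 hj).2 (by rw [hjk]; exact lt_irrefl _)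
    have := Finset.card_le_card hsub
    rw [Finset.card_erase_of_mem (Finset.mem_univ k), Finset.card_univ, Fintype.card_fin] at this
    have hN : 0 < N := k.pos
    change r k ≤ N - 1 at this
    omega
  have himg : Finset.univ.image r = Finset.range N := by
    apply Finset.eq_of_subset_of_card_le
    · intro v hv
      obtain ⟨k, _, hk⟩ := Finset.mem_image.1 hv
      exact Finset.mem_range.2 (hk ▸ hlt k)
    · rw [Finset.card_range, Finset.card_image_of_injective _ hrinj, Finset.card_univ,
        Fintype.card_fin]
  have key : (Finset.univ.filter fun k => r k ≤ m).image r
      = (Finset.univ.image r).filter (fun v => v ≤ m) := by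
    rw [Finset.filter_image]
  have hcard : (Finset.univ.filter fun k => r k ≤ m).card
      = ((Finset.univ.image r).filter (fun v => v ≤ m)).card := by
    rw [← key, Finset.card_image_of_injective _ hrinj]
  rw [hcard, himg]
  have : (Finset.range N).filter (fun v => v ≤ m) = Finset.range (m + 1) := by
    ext v
    simp only [Finset.mem_filter, Finset.mem_range]
    omega
  rw [this, Finset.card_range]



lemma racer_card_perm {ι : Type*} [Fintype ι] [DecidableEq ι] (σ : Equiv.Perm ι)
    (p : ι → Prop) [DecidablePred p] :
    (Finset.univ.filter fun j => p (σ j)).card = (Finset.univ.filter p).card := by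
  apply Finset.card_bij (fun j _ => σ j)
  · intro a ha
    simp only [Finset.mem_filter, Finset.mem_univ, true_and] at ha ⊢
    exact ha
  · intro a _ b _ h
    exact σ.injective h
  · intro b hb
    refine ⟨σ.symm b, ?_, by simp⟩
    simp only [Finset.mem_filter, Finset.mem_univ, true_and] at hb ⊢
    simpa using hb

lemma racer_measB {N m : ℕ} (k : Fin N) :
    MeasurableSet {x : Fin N → ℝ | (Finset.univ.filter fun j => x k < x j).card ≤ m} := by
  have hm : Measurable fun x : Fin N → ℝ =>
      (Finset.univ.filter fun j => x k < x j).card := by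
    simp only [Finset.card_filter]
    exact Finset.measurable_sum _ fun j _ =>
      Measurable.ite (measurableSet_lt (measurable_pi_apply k) (measurable_pi_apply j))
        measurable_const measurable_const
  exact hm (measurableSet_Iic (a := m))

lemma racer_measInj {N : ℕ} :
    MeasurableSet {x : Fin N → ℝ | Function.Injective x} := by
  have hset : {x : Fin N → ℝ | Function.Injective x}
      = ⋂ (i) (j) (_ : i ≠ j), {x : Fin N → ℝ | x i = x j}ᶜ := by
    ext x
    simp only [Set.mem_iInter, Set.mem_setOf_eq, Set.mem_compl_iff]
    constructor
    · intro h i j hij hx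
      exact hij (h hx)
    · intro h a b hab
      by_contra hne
      exact h a b hne hab
  rw [hset]
  exact MeasurableSet.iInter fun i => MeasurableSet.iInter fun j =>
    MeasurableSet.iInter fun _ =>
      (measurableSet_eq_fun (measurable_pi_apply i) (measurable_pi_apply j)).compl

lemma racer_collision {Ω : Type*} [MeasurableSpace Ω] (μ : Measure Ω) [IsProbabilityMeasure μ]
    {N : ℕ} (s : Fin N → Ω → ℝ) (hmeas : ∀ i, Measurable (s i))
    (hindep : ProbabilityTheory.iIndepFun s μ)
    (hcont : ∀ i c, μ {ω | s i ω = c} = 0) {i j : Fin N} (hij : i ≠ j) :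
    μ {ω | s i ω = s j ω} = 0 := by
  have hIF : ProbabilityTheory.IndepFun (s i) (s j) μ := hindep.indepFun hij
  have hpair : Measure.map (fun ω => (s i ω, s j ω)) μ
      = (Measure.map (s i) μ).prod (Measure.map (s j) μ) :=
    (ProbabilityTheory.indepFun_iff_map_prod_eq_prod_map_map
      (hmeas i).aemeasurable (hmeas j).aemeasurable).mp hIF
  have hdiag : MeasurableSet {p : ℝ × ℝ | p.1 = p.2} :=
    measurableSet_eq_fun measurable_fst measurable_snd
  have h1 : μ {ω | s i ω = s j ω}
      = Measure.map (fun ω => (s i ω, s j ω)) μ {p : ℝ × ℝ | p.1 = p.2} := by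
    rw [Measure.map_apply ((hmeas i).prodMk (hmeas j)) hdiag]
    rfl
  have hz' : ∀ a : ℝ, (Measure.map (s j) μ) {a} = 0 := by
    intro a
    rw [Measure.map_apply (hmeas j) (measurableSet_singleton a)]
    simpa [Set.preimage, eq_comm] using hcont j a
  have hpre : ∀ a : ℝ, (Prod.mk a ⁻¹' {p : ℝ × ℝ | p.1 = p.2}) = {a} := by
    intro a
    ext b
    simp [eq_comm]
  rw [h1, hpair, Measure.prod_apply hdiag]
  simp [hpre, hz']

/-- Two-sided bound: with λ̂ = inf{λ : (n/(n+1))·L̄_n(λ) + 1/(n+1) ≤ α},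
L̄_n(λ) = (1/n) Σ_{i=1}^n 1{s_i > λ}, for exchangeable (indeed i.i.d. with
continuous distribution) s₁,…,s_{n+1} and α(n+1) ≥ 1,
α − 2/(n+1) ≤ P(s_{n+1} > λ̂) ≤ α. -/
theorem racer_two_sided_bound {Ω : Type*} [MeasurableSpace Ω]
    (μ : Measure Ω) [IsProbabilityMeasure μ]
    (n : ℕ) (s : Fin (n + 1) → Ω → ℝ) (hmeas : ∀ i, Measurable (s i))
    (hexch : ∀ σ : Equiv.Perm (Fin (n + 1)),
      Measure.map (fun ω i => s (σ i) ω) μ = Measure.map (fun ω i => s i ω) μ)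
    (hindep : ProbabilityTheory.iIndepFun s μ)
    (hident : ∀ i, Measure.map (s i) μ = Measure.map (s 0) μ)
    (hcont : ∀ (i : Fin (n + 1)) (c : ℝ), μ {ω | s i ω = c} = 0)
    (α : ℝ) (hα1 : 0 < α) (hα2 : α < 1) (hα3 : 1 ≤ α * (n + 1))
    (Lbar : Ω → ℝ → ℝ)
    (hL : ∀ ω lam, Lbar ω lam =
      (1 / n) * ∑ i : Fin n, (if lam < s i.castSucc ω then (1 : ℝ) else 0))
    (lamhat : Ω → ℝ)
    (hlam : ∀ ω, lamhat ω = sInf {lam : ℝ |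
      (n / (n + 1)) * Lbar ω lam + 1 / (n + 1) ≤ α}) :
    α - 2 / (n + 1) ≤ (μ {ω | lamhat ω < s (Fin.last n) ω}).toReal ∧
      (μ {ω | lamhat ω < s (Fin.last n) ω}).toReal ≤ α := by
  classical
  have hnR : (0:ℝ) < (n:ℝ) + 1 := by positivity
  have hn : 0 < n := by
    rcases Nat.eq_zero_or_pos n with h | h
    · subst h; norm_num at hα3; linarith
    · exact h
  set m : ℕ := ⌊α * ((n:ℝ) + 1) - 1⌋₊ with hmdef
  have hα0 : (0:ℝ) ≤ α * ((n:ℝ) + 1) - 1 := by linarith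
  have hmle : (m:ℝ) ≤ α * ((n:ℝ) + 1) - 1 := Nat.floor_le hα0
  have hmgt : α * ((n:ℝ) + 1) - 1 < (m:ℝ) + 1 := Nat.lt_floor_add_one _
  have hmn : m < n := by
    have h1 : (m:ℝ) < (n:ℝ) := by nlinarith
    exact_mod_cast h1
  -- reformulate lamhat
  have hlam' : ∀ ω, lamhat ω = sInf {lam : ℝ |
      (Finset.univ.filter fun i : Fin n => lam < s i.castSucc ω).card ≤ m} := by
    intro ω
    rw [hlam]
    congr 1
    ext lam
    simp only [Set.mem_setOf_eq]
    rw [hL]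
    have hnne : (n:ℝ) ≠ 0 := Nat.cast_ne_zero.mpr hn.ne'
    have hsum : ∑ i : Fin n, (if lam < s i.castSucc ω then (1:ℝ) else 0)
        = ((Finset.univ.filter fun i : Fin n => lam < s i.castSucc ω).card : ℝ) := by
      rw [Finset.card_filter]
      push_cast
      rfl
    rw [hsum]
    have harith : (n:ℝ)/((n:ℝ)+1) * (1/(n:ℝ) *
          ((Finset.univ.filter fun i : Fin n => lam < s i.castSucc ω).card : ℝ)) + 1/((n:ℝ)+1)
        = (((Finset.univ.filter fun i : Fin n => lam < s i.castSucc ω).card : ℝ) + 1)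
            / ((n:ℝ)+1) := by
      field_simp
    rw [harith, div_le_iff₀ hnR]
    constructor
    · intro h
      exact Nat.le_floor (by linarith)
    · intro h
      have hcm : ((Finset.univ.filter fun i : Fin n => lam < s i.castSucc ω).card : ℝ)
          ≤ (m:ℝ) := Nat.cast_le.mpr h
      linarith
  -- events
  have hvmeas : Measurable (fun ω (i : Fin (n+1)) => s i ω) :=
    measurable_pi_lambda _ fun i => hmeas i
  set B : Set (Fin (n+1) → ℝ) :=
    {x | (Finset.univ.filter fun j => x (Fin.last n) < x j).card ≤ m} with hB
  have hBmeas : MeasurableSet B := racer_measB (Fin.last n)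
  set A : Fin (n+1) → Set Ω := fun k =>
    {ω | (Finset.univ.filter fun j => s k ω < s j ω).card ≤ m} with hA
  have hAmeas : ∀ k, MeasurableSet (A k) := by
    intro k
    have h1 : A k = (fun ω (i : Fin (n+1)) => s i ω) ⁻¹' {x : Fin (n+1) → ℝ |
        (Finset.univ.filter fun j => x k < x j).card ≤ m} := rfl
    rw [h1]
    exact hvmeas (racer_measB k)
  have hAeq : ∀ k, μ (A k) = μ (A (Fin.last n)) := by
    intro k
    set σ : Equiv.Perm (Fin (n+1)) := Equiv.swap k (Fin.last n) with hσ
    have hw : Measurable fun ω (i : Fin (n+1)) => s (σ i) ω :=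
      measurable_pi_lambda _ fun i => hmeas (σ i)
    have h1 : μ (A (Fin.last n)) = Measure.map (fun ω (i : Fin (n+1)) => s i ω) μ B := by
      rw [Measure.map_apply hvmeas hBmeas]
      rfl
    have h2 : (fun ω (i : Fin (n+1)) => s (σ i) ω) ⁻¹' B = A k := by
      ext ω
      simp only [hB, hA, Set.mem_preimage, Set.mem_setOf_eq]
      have hσl : σ (Fin.last n) = k := Equiv.swap_apply_right _ _
      simp only [hσl]
      rw [racer_card_perm σ (fun j => s k ω < s j ω)]
    rw [h1, ← hexch σ, Measure.map_apply hw hBmeas, h2]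
  -- distinctness
  set D : Set Ω := {ω | Function.Injective fun i => s i ω} with hD
  have hDmeas : MeasurableSet D := hvmeas racer_measInj
  have hDc : μ Dᶜ = 0 := by
    have hsub : Dᶜ ⊆ ⋃ (i) (j) (_ : i ≠ j), {ω | s i ω = s j ω} := by
      intro ω hω
      rw [Set.mem_compl_iff, hD, Set.mem_setOf_eq, Function.not_injective_iff] at hω
      obtain ⟨i, j, hval, hne⟩ := hω
      exact Set.mem_iUnion.2 ⟨i, Set.mem_iUnion.2 ⟨j, Set.mem_iUnion.2 ⟨hne, hval⟩⟩⟩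
    exact measure_mono_null hsub (measure_iUnion_null fun i => measure_iUnion_null fun j =>
      measure_iUnion_null fun hij => racer_collision μ s hmeas hindep hcont hij)
  have hDone : μ D = 1 := (prob_compl_eq_zero_iff hDmeas).mp hDc
  -- counting
  have hcount : ∑ k : Fin (n+1), μ (A k ∩ D) = ((m:ℝ≥0∞)+1) * μ D := by
    have hmeasAD : ∀ k : Fin (n+1), MeasurableSet (A k ∩ D) :=
      fun k => (hAmeas k).inter hDmeas
    have h1 : ∀ k : Fin (n+1), μ (A k ∩ D)
        = ∫⁻ ω, (A k ∩ D).indicator (fun _ => (1:ℝ≥0∞)) ω ∂μ := by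
      intro k
      exact (lintegral_indicator_one (hmeasAD k)).symm
    simp_rw [h1]
    rw [← lintegral_finset_sum _ fun k _ => measurable_const.indicator (hmeasAD k)]
    have h2 : ∀ ω, ∑ k : Fin (n+1), (A k ∩ D).indicator (fun _ => (1:ℝ≥0∞)) ω
        = D.indicator (fun _ => ((m:ℝ≥0∞)+1)) ω := by
      intro ω
      by_cases hω : ω ∈ D
      · have hterm : ∀ k : Fin (n+1), (A k ∩ D).indicator (fun _ => (1:ℝ≥0∞)) ω
            = if ω ∈ A k then 1 else 0 := by
          intro k
          by_cases hk : ω ∈ A k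
          · simp [Set.indicator_of_mem, Set.mem_inter_iff, hk, hω]
          · simp [Set.mem_inter_iff, hk]
        simp_rw [hterm]
        rw [Finset.sum_boole, Set.indicator_of_mem hω]
        have hinj : Function.Injective fun i => s i ω := hω
        have hcard := racer_aux2 (Nat.lt_succ_of_lt hmn) (fun i => s i ω) hinj
        have hfe : (Finset.univ.filter fun k : Fin (n+1) => ω ∈ A k)
            = Finset.univ.filter fun k : Fin (n+1) =>
                (Finset.univ.filter fun j => s k ω < s j ω).card ≤ m := rfl
        rw [hfe, hcard]
        push_cast
        ring
      · simp [Set.indicator_of_notMem, hω, Set.mem_inter_iff]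
    simp_rw [h2]
    rw [lintegral_indicator_const hDmeas]
  -- combine
  have htotal : ((n:ℝ≥0∞)+1) * μ (A (Fin.last n)) = (m:ℝ≥0∞) + 1 := by
    have hAD : ∀ k : Fin (n+1), μ (A k ∩ D) = μ (A k) :=
      fun k => measure_inter_conull hDc
    have h1 : ∑ k : Fin (n+1), μ (A k ∩ D) = ((n:ℝ≥0∞)+1) * μ (A (Fin.last n)) := by
      calc ∑ k : Fin (n+1), μ (A k ∩ D) = ∑ k : Fin (n+1), μ (A (Fin.last n)) := by
            refine Finset.sum_congr rfl fun k _ => ?_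
            rw [hAD k, hAeq k]
        _ = ((n:ℝ≥0∞)+1) * μ (A (Fin.last n)) := by
            rw [Finset.sum_const, Finset.card_univ, Fintype.card_fin, nsmul_eq_mul]
            push_cast
            ring
    rw [← h1, hcount, hDone, mul_one]
  have hne0 : ((n:ℝ≥0∞)+1) ≠ 0 := by simp
  have hnetop : ((n:ℝ≥0∞)+1) ≠ ⊤ := by
    simp [ENNReal.add_ne_top]
  have hlast : μ (A (Fin.last n)) = ((m:ℝ≥0∞)+1) / ((n:ℝ≥0∞)+1) :=
    (ENNReal.eq_div_iff hne0 hnetop).mpr htotal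
  have htR : (μ (A (Fin.last n))).toReal = ((m:ℝ)+1) / ((n:ℝ)+1) := by
    rw [hlast]
    rw [show ((m:ℝ≥0∞)+1) = ((m+1:ℕ):ℝ≥0∞) by push_cast; ring,
        show ((n:ℝ≥0∞)+1) = ((n+1:ℕ):ℝ≥0∞) by push_cast; ring]
    rw [ENNReal.toReal_div, ENNReal.toReal_natCast, ENNReal.toReal_natCast]
    push_cast
    ring
  -- identify the target set
  have hTA : μ {ω | lamhat ω < s (Fin.last n) ω} = μ (A (Fin.last n)) := by
    apply measure_congr
    have hN0 : ∀ᵐ ω ∂μ, ∀ i : Fin n, s i.castSucc ω ≠ s (Fin.last n) ω := by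
      rw [ae_all_iff]
      intro i
      have hz := racer_collision μ s hmeas hindep hcont
        (i := i.castSucc) (j := Fin.last n) (Fin.castSucc_lt_last i).ne
      rw [ae_iff]
      simpa using hz
    filter_upwards [hN0] with ω hω
    show (ω ∈ {ω | lamhat ω < s (Fin.last n) ω}) = (ω ∈ A (Fin.last n))
    apply propext
    rw [Set.mem_setOf_eq, hlam' ω]
    rw [racer_aux1 hn hmn (fun i => s i.castSucc ω) (s (Fin.last n) ω) hω]
    have hcards : (Finset.univ.filter fun j : Fin (n+1) => s (Fin.last n) ω < s j ω).card
        = (Finset.univ.filter fun i : Fin n => s (Fin.last n) ω < s i.castSucc ω).card := by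
      rw [Finset.card_filter, Finset.card_filter, Fin.sum_univ_castSucc]
      simp
    rw [hA, Set.mem_setOf_eq, hcards]
  rw [hTA, htR]
  have hexp : (α - 2/((n:ℝ)+1)) * ((n:ℝ)+1) = α * ((n:ℝ)+1) - 2 := by
    field_simp
  constructor
  · rw [le_div_iff₀ hnR]
    rw [hexp]
    linarith
  · rw [div_le_iff₀ hnR]
    linarith
end

section
/- Exchangeability rank bound: if s₁,…,s_{n+1} are exchangeable real random variables, then for any k ∈ {1,…,n+1}, P(s_{n+1} is among the k largest of s₁,…,s_{n+1}, with ties counted favorably) ≤ k/(n+1); more precisely, P(Σ_{i=1}^{n+1} 1{s_i ≥ s_{n+1}} ≤ k) ≤ k/(n+1). -/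
open MeasureTheory

/-- Rank of coordinate `j` (with ties counted favorably). -/
noncomputable def rnk (n : ℕ) (j : Fin (n + 1)) (x : Fin (n + 1) → ℝ) : ℕ :=
  ∑ i : Fin (n + 1), if x j ≤ x i then 1 else 0

lemma rnk_measurable (n : ℕ) (j : Fin (n + 1)) : Measurable (rnk n j) := by
  apply Finset.measurable_sum
  intro i _
  exact Measurable.ite (measurableSet_le (measurable_pi_apply j) (measurable_pi_apply i))
    measurable_const measurable_const

lemma rnk_card_bound (n : ℕ) (k : ℕ) (x : Fin (n + 1) → ℝ) :
    (Finset.univ.filter (fun j => rnk n j x ≤ k)).card ≤ k := by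
  set S := Finset.univ.filter (fun j => rnk n j x ≤ k) with hS
  rcases S.eq_empty_or_nonempty with h | h
  · simp [h]
  · obtain ⟨j0, hj0, hmin⟩ := S.exists_min_image x h
    have hsub : S ⊆ Finset.univ.filter (fun i => x j0 ≤ x i) := by
      intro j hj
      simp only [Finset.mem_filter, Finset.mem_univ, true_and]
      exact hmin j hj
    have h1 : S.card ≤ (Finset.univ.filter (fun i => x j0 ≤ x i)).card :=
      Finset.card_le_card hsub
    have h2 : (Finset.univ.filter (fun i => x j0 ≤ x i)).card = rnk n j0 x := by
      rw [rnk, Finset.card_filter]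
    have h3 : rnk n j0 x ≤ k := by
      simpa [hS] using hj0
    omega

/-- Exchangeability rank bound: for exchangeable s₁,…,s_{n+1} and k ∈ {1,…,n+1},
P(Σ_{i=1}^{n+1} 1{s_i ≥ s_{n+1}} ≤ k) ≤ k/(n+1). -/
theorem racer_exchangeable_rank_bound {Ω : Type*} [MeasurableSpace Ω]
    (μ : Measure Ω) [IsProbabilityMeasure μ]
    (n : ℕ) (s : Fin (n + 1) → Ω → ℝ) (hmeas : ∀ i, Measurable (s i))
    (hexch : ∀ σ : Equiv.Perm (Fin (n + 1)),
      Measure.map (fun ω i => s (σ i) ω) μ = Measure.map (fun ω i => s i ω) μ)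
    (k : ℕ) (hk1 : 1 ≤ k) (hk2 : k ≤ n + 1) :
    (μ {ω | (∑ i : Fin (n + 1),
        (if s (Fin.last n) ω ≤ s i ω then (1 : ℕ) else 0)) ≤ k}).toReal ≤
      (k : ℝ) / (n + 1) := by
  classical
  set T : Ω → (Fin (n + 1) → ℝ) := fun ω i => s i ω with hT
  have hTmeas : Measurable T := measurable_pi_lambda _ (fun i => hmeas i)
  set ν : Measure (Fin (n + 1) → ℝ) := Measure.map T μ with hν
  have hνprob : IsProbabilityMeasure ν := Measure.isProbabilityMeasure_map hTmeas.aemeasurable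
  set A : Fin (n + 1) → Set (Fin (n + 1) → ℝ) := fun j => {x | rnk n j x ≤ k} with hA
  have hAmeas : ∀ j, MeasurableSet (A j) := fun j =>
    (rnk_measurable n j) measurableSet_Iic
  -- invariance : ν (A j) = ν (A (last))
  have hinv : ∀ j : Fin (n + 1), ν (A j) = ν (A (Fin.last n)) := by
    intro j
    set σ : Equiv.Perm (Fin (n + 1)) := Equiv.swap j (Fin.last n) with hσ
    have hg : Measurable (fun x : Fin (n + 1) → ℝ => fun i => x (σ i)) :=
      measurable_pi_lambda _ (fun i => measurable_pi_apply (σ i))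
    have hmap : Measure.map (fun x : Fin (n + 1) → ℝ => fun i => x (σ i)) ν = ν := by
      have hcomp : (fun ω i => s (σ i) ω)
          = (fun x : Fin (n + 1) → ℝ => fun i => x (σ i)) ∘ T := rfl
      rw [hν, Measure.map_map hg hTmeas, ← hcomp]
      exact hexch σ
    have hpre : (fun x : Fin (n + 1) → ℝ => fun i => x (σ i)) ⁻¹' (A (Fin.last n)) = A j := by
      ext x
      simp only [Set.mem_preimage, hA, Set.mem_setOf_eq, rnk]
      have hσlast : σ (Fin.last n) = j := Equiv.swap_apply_right j (Fin.last n)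
      simp only [hσlast]
      constructor <;> intro hx
      · calc (∑ i : Fin (n + 1), if x j ≤ x i then 1 else 0)
            = ∑ i : Fin (n + 1), if x j ≤ x (σ i) then 1 else 0 :=
              (Fintype.sum_equiv σ _ _ (fun i => rfl)).symm
          _ ≤ k := hx
      · calc (∑ i : Fin (n + 1), if x j ≤ x (σ i) then 1 else 0)
            = ∑ i : Fin (n + 1), if x j ≤ x i then 1 else 0 :=
              Fintype.sum_equiv σ _ _ (fun i => rfl)
          _ ≤ k := hx
    calc ν (A j) = ν ((fun x : Fin (n + 1) → ℝ => fun i => x (σ i)) ⁻¹' (A (Fin.last n))) := by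
          rw [hpre]
      _ = (Measure.map (fun x : Fin (n + 1) → ℝ => fun i => x (σ i)) ν) (A (Fin.last n)) :=
          (Measure.map_apply hg (hAmeas (Fin.last n))).symm
      _ = ν (A (Fin.last n)) := by rw [hmap]
  -- sum bound : ∑ j, ν (A j) ≤ k
  have hsum : ∑ j : Fin (n + 1), ν (A j) ≤ (k : ENNReal) := by
    have heq : ∑ j : Fin (n + 1), ν (A j)
        = ∫⁻ x, ∑ j : Fin (n + 1), (A j).indicator (fun _ => (1 : ENNReal)) x ∂ν := by
      rw [lintegral_finset_sum _ (fun j _ =>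
        (measurable_const.indicator (hAmeas j)))]
      apply Finset.sum_congr rfl
      intro j _
      exact (lintegral_indicator_one (hAmeas j)).symm
    rw [heq]
    have hle : ∀ x, (∑ j : Fin (n + 1), (A j).indicator (fun _ => (1 : ENNReal)) x)
        ≤ (k : ENNReal) := by
      intro x
      have : (∑ j : Fin (n + 1), (A j).indicator (fun _ => (1 : ENNReal)) x)
          = ((Finset.univ.filter (fun j => rnk n j x ≤ k)).card : ENNReal) := by
        rw [Finset.card_filter]
        push_cast
        apply Finset.sum_congr rfl
        intro j _
        by_cases hj : x ∈ A j
        · have : rnk n j x ≤ k := hj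
          simp [Set.indicator_of_mem hj, this]
        · have : ¬ rnk n j x ≤ k := hj
          simp [Set.indicator_of_notMem hj, this]
      rw [this]
      exact_mod_cast Nat.cast_le.mpr (rnk_card_bound n k x)
    calc ∫⁻ x, ∑ j : Fin (n + 1), (A j).indicator (fun _ => (1 : ENNReal)) x ∂ν
        ≤ ∫⁻ _, (k : ENNReal) ∂ν := lintegral_mono hle
      _ = (k : ENNReal) := by simp [measure_univ]
  have hconst : ∑ j : Fin (n + 1), ν (A j) = (n + 1 : ℕ) * ν (A (Fin.last n)) := by
    rw [Finset.sum_congr rfl (fun j _ => hinv j)]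
    simp [Finset.card_univ, mul_comm]
  have hkey : ((n : ENNReal) + 1) * ν (A (Fin.last n)) ≤ (k : ENNReal) := by
    have := hsum
    rw [hconst] at this
    convert this using 2
    push_cast
    ring
  -- the original event is T ⁻¹' (A (last))
  have hEvent : μ {ω | (∑ i : Fin (n + 1),
      (if s (Fin.last n) ω ≤ s i ω then (1 : ℕ) else 0)) ≤ k} = ν (A (Fin.last n)) := by
    rw [hν, Measure.map_apply hTmeas (hAmeas (Fin.last n))]
    rfl
  rw [hEvent]
  have hdiv : ν (A (Fin.last n)) ≤ (k : ENNReal) / ((n : ENNReal) + 1) := by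
    rw [ENNReal.le_div_iff_mul_le (by simp) (by simp)]
    rw [mul_comm]
    exact hkey
  have hfin : (k : ENNReal) / ((n : ENNReal) + 1) ≠ ⊤ := by
    exact (ENNReal.div_lt_top (by simp) (by simp)).ne
  calc (ν (A (Fin.last n))).toReal
      ≤ ((k : ENNReal) / ((n : ENNReal) + 1)).toReal := ENNReal.toReal_mono hfin hdiv
    _ = (k : ℝ) / (n + 1) := by
        rw [ENNReal.toReal_div, ENNReal.toReal_natCast,
          show ((n : ENNReal) + 1) = ((n + 1 : ℕ) : ENNReal) by push_cast; ring,
          ENNReal.toReal_natCast]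
        push_cast
        ring
end
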